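/- Fix d ≥ 1. For n ≥ 3 define c_n(k) for 0 ≤ k ≤ d−1 as the number of d-legal words on the alphabet {a,b,A,B} of weight n or n+1 whose first k letters avoid A and whose first d letters avoid B. Then c_n(0) = c_{n−2}(0) + c_{n−2}(d−1) + c_{n−3}(d−1), and c_n(k) = c_{n−2}(k−1) + c_{n−2}(d−1) for 1 ≤ k ≤ d−1. -/
import Mathlib


/-- The four-letter alphabet `Σ = {a, b, A, B}`. -/
inductive Letter | a | b | A | B
deriving DecidableEq

/-- Letter weights: `w(a)=w(b)=2`, `w(A)=w(B)=3`. -/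
def Letter.wt : Letter → ℕ
  | .a => 2 | .b => 2 | .A => 3 | .B => 3

/-- The weight of a word is the sum of the weights of its letters. -/
def wtWord (x : List Letter) : ℕ := (x.map Letter.wt).sum

/-- A word `x` (0-indexed) is `d`-legal if whenever `x_m = A` then `x_{m−i} = a` for
`1 ≤ i ≤ min(d−1, m)`, and if `m ≥ d` then `x_{m−d} ∈ {a, A}`; and symmetrically for
`B` with `b`. -/
def dLegal (d : ℕ) (x : List Letter) : Prop :=
  ∀ m : ℕ, ∀ hm : m < x.length,
    (x.get ⟨m, hm⟩ = .A →
      (∀ i, 1 ≤ i → i ≤ d - 1 → i ≤ m → x.get ⟨m - i, by omega⟩ = .a) ∧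
      (d ≤ m → x.get ⟨m - d, by omega⟩ = .a ∨ x.get ⟨m - d, by omega⟩ = .A)) ∧
    (x.get ⟨m, hm⟩ = .B →
      (∀ i, 1 ≤ i → i ≤ d - 1 → i ≤ m → x.get ⟨m - i, by omega⟩ = .b) ∧
      (d ≤ m → x.get ⟨m - d, by omega⟩ = .b ∨ x.get ⟨m - d, by omega⟩ = .B))

/-- `cn d n k` is the number of `d`-legal words of weight `n` or `n+1` whose first `k`
letters avoid `A` and whose first `d` letters avoid `B`. -/
noncomputable def cn (d n k : ℕ) : ℕ :=
  Set.ncard {x : List Letter | dLegal d x ∧ (wtWord x = n ∨ wtWord x = n + 1) ∧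
    (∀ m, ∀ hm : m < x.length, m < k → x.get ⟨m, hm⟩ ≠ .A) ∧
    (∀ m, ∀ hm : m < x.length, m < d → x.get ⟨m, hm⟩ ≠ .B)}

lemma get_shift (ℓ : Letter) (y : List Letter) (p q : ℕ) (hpq : p = q + 1)
    (h : p < (ℓ :: y).length) (h' : q < y.length) :
    (ℓ :: y).get ⟨p, h⟩ = y.get ⟨q, h'⟩ := by subst hpq; rfl
lemma get_zero (ℓ : Letter) (y : List Letter) (p : ℕ) (hp0 : p = 0)
    (h : p < (ℓ :: y).length) : (ℓ :: y).get ⟨p, h⟩ = ℓ := by subst hp0; rfl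

lemma dLegal_cons {d : ℕ} (hd : 1 ≤ d) (ℓ : Letter) (y : List Letter) :
    dLegal d (ℓ :: y) ↔ dLegal d y ∧ ∀ m : ℕ, ∀ hm : m < y.length,
      (y.get ⟨m, hm⟩ = .A → (m + 2 ≤ d → ℓ = .a) ∧ (m + 1 = d → (ℓ = .a ∨ ℓ = .A))) ∧
      (y.get ⟨m, hm⟩ = .B → (m + 2 ≤ d → ℓ = .b) ∧ (m + 1 = d → (ℓ = .b ∨ ℓ = .B))) := by
  constructor
  · intro H
    have key : ∀ m : ℕ, ∀ hm : m < y.length,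
        ((ℓ :: y).get ⟨m + 1, by simp only [List.length_cons]; omega⟩ = y.get ⟨m, hm⟩) :=
      fun m hm => get_shift ℓ y (m+1) m rfl _ hm
    constructor
    · intro m hm
      have Hx := H (m + 1) (by simp only [List.length_cons]; omega)
      rw [key m hm] at Hx
      constructor
      · intro hA
        obtain ⟨h1, h2⟩ := Hx.1 hA
        refine ⟨fun i hi1 hi2 hi3 => ?_, fun hdm => ?_⟩
        · have := h1 i hi1 hi2 (by omega)
          rwa [get_shift ℓ y (m+1-i) (m-i) (by omega) _ (by omega)] at this
        · have := h2 (by omega)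
          rwa [get_shift ℓ y (m+1-d) (m-d) (by omega) _ (by omega)] at this
      · intro hB
        obtain ⟨h1, h2⟩ := Hx.2 hB
        refine ⟨fun i hi1 hi2 hi3 => ?_, fun hdm => ?_⟩
        · have := h1 i hi1 hi2 (by omega)
          rwa [get_shift ℓ y (m+1-i) (m-i) (by omega) _ (by omega)] at this
        · have := h2 (by omega)
          rwa [get_shift ℓ y (m+1-d) (m-d) (by omega) _ (by omega)] at this
    · intro m hm
      have Hx := H (m + 1) (by simp only [List.length_cons]; omega)
      rw [key m hm] at Hx
      constructor
      · intro hA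
        obtain ⟨h1, h2⟩ := Hx.1 hA
        refine ⟨fun h => ?_, fun h => ?_⟩
        · have := h1 (m+1) (by omega) (by omega) (by omega)
          rwa [get_zero ℓ y _ (by omega)] at this
        · have := h2 (by omega)
          rwa [get_zero ℓ y _ (by omega)] at this
      · intro hB
        obtain ⟨h1, h2⟩ := Hx.2 hB
        refine ⟨fun h => ?_, fun h => ?_⟩
        · have := h1 (m+1) (by omega) (by omega) (by omega)
          rwa [get_zero ℓ y _ (by omega)] at this
        · have := h2 (by omega)
          rwa [get_zero ℓ y _ (by omega)] at this
  · rintro ⟨Hy, Hex⟩ m hm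
    match m with
    | 0 =>
      exact ⟨fun _ => ⟨fun i hi1 _ hi3 => absurd hi3 (by omega), fun hdm => absurd hdm (by omega)⟩,
             fun _ => ⟨fun i hi1 _ hi3 => absurd hi3 (by omega), fun hdm => absurd hdm (by omega)⟩⟩
    | m + 1 =>
      have hm' : m < y.length := by simp only [List.length_cons] at hm; omega
      rw [get_shift ℓ y (m+1) m rfl hm hm']
      constructor
      · intro hA
        have hy := (Hy m hm').1 hA
        have hex := (Hex m hm').1 hA
        refine ⟨fun i hi1 hi2 hi3 => ?_, fun hdm => ?_⟩
        · rcases Nat.lt_or_ge i (m+1) with hlt | hge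
          · rw [get_shift ℓ y (m+1-i) (m-i) (by omega) _ (by omega)]
            exact hy.1 i hi1 hi2 (by omega)
          · rw [get_zero ℓ y (m+1-i) (by omega)]
            exact hex.1 (by omega)
        · by_cases hdm' : d ≤ m
          · rw [get_shift ℓ y (m+1-d) (m-d) (by omega) _ (by omega)]
            exact hy.2 hdm'
          · rw [get_zero ℓ y (m+1-d) (by omega)]
            exact hex.2 (by omega)
      · intro hB
        have hy := (Hy m hm').2 hB
        have hex := (Hex m hm').2 hB
        refine ⟨fun i hi1 hi2 hi3 => ?_, fun hdm => ?_⟩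
        · rcases Nat.lt_or_ge i (m+1) with hlt | hge
          · rw [get_shift ℓ y (m+1-i) (m-i) (by omega) _ (by omega)]
            exact hy.1 i hi1 hi2 (by omega)
          · rw [get_zero ℓ y (m+1-i) (by omega)]
            exact hex.1 (by omega)
        · by_cases hdm' : d ≤ m
          · rw [get_shift ℓ y (m+1-d) (m-d) (by omega) _ (by omega)]
            exact hy.2 hdm'
          · rw [get_zero ℓ y (m+1-d) (by omega)]
            exact hex.2 (by omega)

def swp : Letter → Letter
  | .a => .b | .b => .a | .A => .B | .B => .A
lemma swp_swp (l : Letter) : swp (swp l) = l := by cases l <;> rfl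
lemma map_swp_swp (y : List Letter) : (y.map swp).map swp = y := by
  induction y with
  | nil => rfl
  | cons h t ih => simp [swp_swp, ih]
lemma get_map_swp (y : List Letter) (p : ℕ) (h : p < (y.map swp).length)
    (h' : p < y.length) : (y.map swp).get ⟨p, h⟩ = swp (y.get ⟨p, h'⟩) := by
  simp [List.get_eq_getElem]
lemma len_map_swp (y : List Letter) : (y.map swp).length = y.length := by simp

lemma dLegal_map_swp_of {d : ℕ} {y : List Letter} (H : dLegal d y) : dLegal d (y.map swp) := by
  intro m hm
  have hm' : m < y.length := by rw [len_map_swp] at hm; exact hm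
  rw [get_map_swp y m hm hm']
  constructor
  · intro hA
    have hB : y.get ⟨m, hm'⟩ = .B := by
      rcases h : y.get ⟨m, hm'⟩ <;> rw [h] at hA <;> simp_all [swp]
    have hy := (H m hm').2 hB
    refine ⟨fun i hi1 hi2 hi3 => ?_, fun hdm => ?_⟩
    · rw [get_map_swp y _ _ (by omega), hy.1 i hi1 hi2 hi3]; rfl
    · rcases hy.2 hdm with h | h
      · left; rw [get_map_swp y _ _ (by omega), h]; rfl
      · right; rw [get_map_swp y _ _ (by omega), h]; rfl
  · intro hB
    have hA : y.get ⟨m, hm'⟩ = .A := by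
      rcases h : y.get ⟨m, hm'⟩ <;> rw [h] at hB <;> simp_all [swp]
    have hy := (H m hm').1 hA
    refine ⟨fun i hi1 hi2 hi3 => ?_, fun hdm => ?_⟩
    · rw [get_map_swp y _ _ (by omega), hy.1 i hi1 hi2 hi3]; rfl
    · rcases hy.2 hdm with h | h
      · left; rw [get_map_swp y _ _ (by omega), h]; rfl
      · right; rw [get_map_swp y _ _ (by omega), h]; rfl

lemma dLegal_map_swp {d : ℕ} {y : List Letter} : dLegal d (y.map swp) ↔ dLegal d y :=
  ⟨fun H => by have := dLegal_map_swp_of H; rwa [map_swp_swp] at this, dLegal_map_swp_of⟩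

instance : Fintype Letter := ⟨⟨{.a, .b, .A, .B}, by decide⟩, by intro x; cases x <;> decide⟩
lemma swp_eq_A {l : Letter} : swp l = .A ↔ l = .B := by cases l <;> simp [swp]
lemma swp_eq_B {l : Letter} : swp l = .B ↔ l = .A := by cases l <;> simp [swp]
lemma swp_ne_A {l : Letter} : swp l ≠ .A ↔ l ≠ .B := by cases l <;> simp [swp]
lemma swp_ne_B {l : Letter} : swp l ≠ .B ↔ l ≠ .A := by cases l <;> simp [swp]

def Tset (d n k : ℕ) : Set (List Letter) :=
  {x : List Letter | dLegal d x ∧ (wtWord x = n ∨ wtWord x = n + 1) ∧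
    (∀ m, ∀ hm : m < x.length, m < k → x.get ⟨m, hm⟩ ≠ .A) ∧
    (∀ m, ∀ hm : m < x.length, m < d → x.get ⟨m, hm⟩ ≠ .B)}

lemma wtWord_cons (ℓ : Letter) (y : List Letter) : wtWord (ℓ :: y) = ℓ.wt + wtWord y := by
  simp [wtWord]

lemma wtWord_map_swp (y : List Letter) : wtWord (y.map swp) = wtWord y := by
  induction y with
  | nil => rfl
  | cons h t ih => cases h <;> simp [wtWord_cons, ih, swp, Letter.wt]

lemma length_le_wtWord (x : List Letter) : x.length ≤ wtWord x := by
  induction x with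
  | nil => simp [wtWord]
  | cons h t ih => cases h <;> simp [wtWord_cons, Letter.wt] <;> omega

lemma Tset_finite (d n k : ℕ) : (Tset d n k).Finite := by
  apply Set.Finite.subset (List.finite_length_le Letter (n+1))
  rintro x ⟨-, hwt, -, -⟩
  have := length_le_wtWord x
  simp only [Set.mem_setOf_eq]
  omega

lemma mem_a {d n k : ℕ} (hd : 1 ≤ d) (hn : 2 ≤ n) (y : List Letter) :
    (Letter.a :: y) ∈ Tset d n k ↔ y ∈ Tset d (n-2) (k-1) := by
  simp only [Tset, Set.mem_setOf_eq]
  rw [dLegal_cons hd]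
  constructor
  · rintro ⟨⟨hleg, hex⟩, hwt, hA, hB⟩
    refine ⟨hleg, ?_, ?_, ?_⟩
    · rw [wtWord_cons] at hwt
      show wtWord y = n - 2 ∨ wtWord y = n - 2 + 1
      simp only [Letter.wt] at hwt; omega
    · intro m hm hmk
      have := hA (m+1) (by simp only [List.length_cons]; omega) (by omega)
      rwa [get_shift _ y (m+1) m rfl _ hm] at this
    · intro m hm hmd hcon
      obtain ⟨h1, h2⟩ := (hex m hm).2 hcon
      rcases Nat.lt_or_ge (m+1) d with h | h
      · simpa using h1 (by omega)
      · have hmd1 : m + 1 = d := by omega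
        rcases h2 hmd1 with h' | h' <;> simp at h'
  · rintro ⟨hleg, hwt, hA, hB⟩
    refine ⟨⟨hleg, ?_⟩, ?_, ?_, ?_⟩
    · intro m hm
      exact ⟨fun _ => ⟨fun _ => rfl, fun _ => Or.inl rfl⟩,
        fun hcon => ⟨fun h2 => absurd hcon (hB m hm (by omega)),
                     fun h1 => absurd hcon (hB m hm (by omega))⟩⟩
    · rw [wtWord_cons]; simp only [Letter.wt]; omega
    · intro m hm hmk
      match m with
      | 0 => rw [get_zero _ y 0 rfl]; simp
      | m+1 =>
        rw [get_shift _ y (m+1) m rfl _ (by simp only [List.length_cons] at hm; omega)]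
        exact hA m _ (by omega)
    · intro m hm hmd
      match m with
      | 0 => rw [get_zero _ y 0 rfl]; simp
      | m+1 =>
        rw [get_shift _ y (m+1) m rfl _ (by simp only [List.length_cons] at hm; omega)]
        exact hB m _ (by omega)

lemma mem_A {d n : ℕ} (hd : 1 ≤ d) (hn : 3 ≤ n) (y : List Letter) :
    (Letter.A :: y) ∈ Tset d n 0 ↔ y ∈ Tset d (n-3) (d-1) := by
  simp only [Tset, Set.mem_setOf_eq]
  rw [dLegal_cons hd]
  constructor
  · rintro ⟨⟨hleg, hex⟩, hwt, -, hB⟩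
    refine ⟨hleg, ?_, ?_, ?_⟩
    · rw [wtWord_cons] at hwt
      show wtWord y = n - 3 ∨ wtWord y = n - 3 + 1
      simp only [Letter.wt] at hwt; omega
    · intro m hm hmk hcon
      simpa using ((hex m hm).1 hcon).1 (by omega)
    · intro m hm hmd hcon
      obtain ⟨h1, h2⟩ := (hex m hm).2 hcon
      rcases Nat.lt_or_ge (m+1) d with h | h
      · simpa using h1 (by omega)
      · have hmd1 : m + 1 = d := by omega
        rcases h2 hmd1 with h' | h' <;> simp at h'
  · rintro ⟨hleg, hwt, hA, hB⟩
    refine ⟨⟨hleg, ?_⟩, ?_, ?_, ?_⟩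
    · intro m hm
      exact ⟨fun hcon => ⟨fun h2 => absurd hcon (hA m hm (by omega)), fun _ => Or.inr rfl⟩,
        fun hcon => ⟨fun h2 => absurd hcon (hB m hm (by omega)),
                     fun h1 => absurd hcon (hB m hm (by omega))⟩⟩
    · rw [wtWord_cons]; simp only [Letter.wt]; omega
    · intro m hm hmk; omega
    · intro m hm hmd
      match m with
      | 0 => rw [get_zero _ y 0 rfl]; simp
      | m+1 =>
        rw [get_shift _ y (m+1) m rfl _ (by simp only [List.length_cons] at hm; omega)]
        exact hB m _ (by omega)

lemma mem_b {d n k : ℕ} (hd : 1 ≤ d) (hn : 2 ≤ n) (hk : k ≤ d) (y : List Letter) :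
    (Letter.b :: (y.map swp)) ∈ Tset d n k ↔ y ∈ Tset d (n-2) (d-1) := by
  simp only [Tset, Set.mem_setOf_eq]
  rw [dLegal_cons hd]
  constructor
  · rintro ⟨⟨hleg, hex⟩, hwt, hA, hB⟩
    refine ⟨dLegal_map_swp.mp hleg, ?_, ?_, ?_⟩
    · rw [wtWord_cons, wtWord_map_swp] at hwt
      show wtWord y = n - 2 ∨ wtWord y = n - 2 + 1
      simp only [Letter.wt] at hwt; omega
    · -- y first d-1 avoid A, from x first d avoid B
      intro m hm hmk hcon
      have hz : m < (y.map swp).length := by rw [len_map_swp]; omega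
      have := hB (m+1) (by simp only [List.length_cons]; omega) (by omega)
      rw [get_shift _ _ (m+1) m rfl _ hz, get_map_swp y m hz hm, hcon] at this
      exact this rfl
    · -- y first d avoid B, from hex on z_m = A
      intro m hm hmd hcon
      have hz : m < (y.map swp).length := by rw [len_map_swp]; omega
      have hzA : (y.map swp).get ⟨m, hz⟩ = .A := by
        rw [get_map_swp y m hz hm, swp_eq_A]; exact hcon
      obtain ⟨h1, h2⟩ := (hex m hz).1 hzA
      rcases Nat.lt_or_ge (m+1) d with h | h
      · simpa using h1 (by omega)
      · have hmd1 : m + 1 = d := by omega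
        rcases h2 hmd1 with h' | h' <;> simp at h'
  · rintro ⟨hleg, hwt, hA, hB⟩
    refine ⟨⟨dLegal_map_swp_of hleg, ?_⟩, ?_, ?_, ?_⟩
    · intro m hm
      have hm' : m < y.length := by rw [len_map_swp] at hm; exact hm
      rw [get_map_swp y m hm hm', swp_eq_A, swp_eq_B]
      exact ⟨fun hcon => ⟨fun h2 => absurd hcon (hB m hm' (by omega)),
                          fun h1 => absurd hcon (hB m hm' (by omega))⟩,
             fun _ => ⟨fun _ => rfl, fun _ => Or.inl rfl⟩⟩
    · rw [wtWord_cons, wtWord_map_swp]; simp only [Letter.wt]; omega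
    · intro m hm hmk
      match m with
      | 0 => rw [get_zero _ _ 0 rfl]; simp
      | m+1 =>
        have hm' : m < y.length := by
          simp only [List.length_cons, len_map_swp] at hm; omega
        rw [get_shift _ _ (m+1) m rfl _ (by rw [len_map_swp]; omega),
          get_map_swp y m _ hm', swp_ne_A]
        exact hB m hm' (by omega)
    · intro m hm hmd
      match m with
      | 0 => rw [get_zero _ _ 0 rfl]; simp
      | m+1 =>
        have hm' : m < y.length := by
          simp only [List.length_cons, len_map_swp] at hm; omega
        rw [get_shift _ _ (m+1) m rfl _ (by rw [len_map_swp]; omega),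
          get_map_swp y m _ hm', swp_ne_B]
        exact hA m hm' (by omega)

lemma inj_a : Function.Injective (fun y : List Letter => Letter.a :: y) :=
  fun y1 y2 h => by simpa using h

lemma inj_b : Function.Injective (fun y : List Letter => Letter.b :: y.map swp) := by
  intro y1 y2 h
  simp only [List.cons.injEq, true_and] at h
  have := congrArg (List.map swp) h
  rwa [map_swp_swp, map_swp_swp] at this

lemma inj_A : Function.Injective (fun y : List Letter => Letter.A :: y) :=
  fun y1 y2 h => by simpa using h

lemma Tset_eq_pos {d n k : ℕ} (hd : 1 ≤ d) (hn : 3 ≤ n) (hk1 : 1 ≤ k) (hk2 : k ≤ d - 1) :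
    Tset d n k = (fun y : List Letter => Letter.a :: y) '' Tset d (n-2) (k-1) ∪
               (fun y : List Letter => Letter.b :: y.map swp) '' Tset d (n-2) (d-1) := by
  ext x
  constructor
  · intro hx
    have hne : x ≠ [] := by
      rintro rfl
      rcases hx.2.1 with h | h <;> simp [wtWord] at h <;> omega
    obtain ⟨ℓ, t, rfl⟩ := List.exists_cons_of_ne_nil hne
    have h0 : (0:ℕ) < (ℓ :: t).length := by simp
    have hℓA : (ℓ :: t).get ⟨0, h0⟩ ≠ .A := hx.2.2.1 0 h0 (by omega)
    have hℓB : (ℓ :: t).get ⟨0, h0⟩ ≠ .B := hx.2.2.2 0 h0 (by omega)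
    rw [get_zero ℓ t 0 rfl] at hℓA hℓB
    cases ℓ with
    | a => exact Or.inl ⟨t, (mem_a hd (by omega) t).mp hx, rfl⟩
    | b =>
      refine Or.inr ⟨t.map swp, (mem_b (k := k) hd (by omega) (by omega) (t.map swp)).mp ?_, ?_⟩
      · rwa [map_swp_swp]
      · simp only [map_swp_swp]
    | A => exact absurd rfl hℓA
    | B => exact absurd rfl hℓB
  · rintro (⟨y, hy, rfl⟩ | ⟨y, hy, rfl⟩)
    · exact (mem_a hd (by omega) y).mpr hy
    · exact (mem_b hd (by omega) (by omega) y).mpr hy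

lemma Tset_eq_zero {d n : ℕ} (hd : 1 ≤ d) (hn : 3 ≤ n) :
    Tset d n 0 = ((fun y : List Letter => Letter.a :: y) '' Tset d (n-2) 0 ∪
               (fun y : List Letter => Letter.b :: y.map swp) '' Tset d (n-2) (d-1)) ∪
               (fun y : List Letter => Letter.A :: y) '' Tset d (n-3) (d-1) := by
  ext x
  constructor
  · intro hx
    have hne : x ≠ [] := by
      rintro rfl
      rcases hx.2.1 with h | h <;> simp [wtWord] at h <;> omega
    obtain ⟨ℓ, t, rfl⟩ := List.exists_cons_of_ne_nil hne
    have h0 : (0:ℕ) < (ℓ :: t).length := by simp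
    have hℓB : (ℓ :: t).get ⟨0, h0⟩ ≠ .B := hx.2.2.2 0 h0 (by omega)
    rw [get_zero ℓ t 0 rfl] at hℓB
    cases ℓ with
    | a => exact Or.inl (Or.inl ⟨t, (mem_a hd (by omega) t).mp hx, rfl⟩)
    | b =>
      refine Or.inl (Or.inr ⟨t.map swp, (mem_b (k := 0) hd (by omega) (by omega) (t.map swp)).mp ?_, ?_⟩)
      · rwa [map_swp_swp]
      · simp only [map_swp_swp]
    | A => exact Or.inr ⟨t, (mem_A hd hn t).mp hx, rfl⟩
    | B => exact absurd rfl hℓB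
  · rintro ((⟨y, hy, rfl⟩ | ⟨y, hy, rfl⟩) | ⟨y, hy, rfl⟩)
    · exact (mem_a hd (by omega) y).mpr hy
    · exact (mem_b hd (by omega) (by omega) y).mpr hy
    · exact (mem_A hd hn y).mpr hy

lemma disj_ab {S T : Set (List Letter)} :
    Disjoint ((fun y : List Letter => Letter.a :: y) '' S)
      ((fun y : List Letter => Letter.b :: y.map swp) '' T) := by
  rw [Set.disjoint_left]
  rintro x ⟨y, -, rfl⟩ ⟨z, -, hz⟩
  simp at hz

lemma disj_aA {S T : Set (List Letter)} :
    Disjoint ((fun y : List Letter => Letter.a :: y) '' S)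
      ((fun y : List Letter => Letter.A :: y) '' T) := by
  rw [Set.disjoint_left]
  rintro x ⟨y, -, rfl⟩ ⟨z, -, hz⟩
  simp at hz

lemma disj_bA {S T : Set (List Letter)} :
    Disjoint ((fun y : List Letter => Letter.b :: y.map swp) '' S)
      ((fun y : List Letter => Letter.A :: y) '' T) := by
  rw [Set.disjoint_left]
  rintro x ⟨y, -, rfl⟩ ⟨z, -, hz⟩
  simp at hz

lemma cn_eq (d n k : ℕ) : cn d n k = (Tset d n k).ncard := rfl

/-- Fix `d ≥ 1`. For `n ≥ 3`,
`c_n(0) = c_{n−2}(0) + c_{n−2}(d−1) + c_{n−3}(d−1)` and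
`c_n(k) = c_{n−2}(k−1) + c_{n−2}(d−1)` for `1 ≤ k ≤ d−1`. -/
theorem stmt13 (d : ℕ) (hd : 1 ≤ d) (n : ℕ) (hn : 3 ≤ n) :
    cn d n 0 = cn d (n - 2) 0 + cn d (n - 2) (d - 1) + cn d (n - 3) (d - 1) ∧
    ∀ k, 1 ≤ k → k ≤ d - 1 → cn d n k = cn d (n - 2) (k - 1) + cn d (n - 2) (d - 1) := by
  constructor
  · rw [cn_eq, Tset_eq_zero hd hn,
      Set.ncard_union_eq (Disjoint.union_left disj_aA disj_bA)
        (((Tset_finite d (n-2) 0).image _).union ((Tset_finite d (n-2) (d-1)).image _))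
        ((Tset_finite d (n-3) (d-1)).image _),
      Set.ncard_union_eq disj_ab ((Tset_finite d (n-2) 0).image _)
        ((Tset_finite d (n-2) (d-1)).image _),
      Set.ncard_image_of_injective _ inj_a, Set.ncard_image_of_injective _ inj_b,
      Set.ncard_image_of_injective _ inj_A, ← cn_eq, ← cn_eq, ← cn_eq]
  · intro k hk1 hk2
    rw [cn_eq, Tset_eq_pos hd hn hk1 hk2,
      Set.ncard_union_eq disj_ab ((Tset_finite d (n-2) (k-1)).image _)
        ((Tset_finite d (n-2) (d-1)).image _),
      Set.ncard_image_of_injective _ inj_a, Set.ncard_image_of_injective _ inj_b,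
      ← cn_eq, ← cn_eq]
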